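/- A finite simple connected graph G induces a 3-periodic Grover walk if and only if G is isomorphic to the cycle graph C_3. -/

import Mathlib

open Matrix SimpleGraph

/-- The Grover transfer matrix `U = U(G)` of a finite simple graph `G`, a `2m × 2m`
complex matrix indexed by the darts (symmetric arcs) of `G`.  For darts `e, f`,
`U e f = 2/deg(t(f)) - 1` if `f = e⁻¹`, `U e f = 2/deg(t(f))` if `t(f) = o(e)` and
`f ≠ e⁻¹`, and `U e f = 0` otherwise. -/
noncomputable def groverMatrix {V : Type*} [Fintype V] [DecidableEq V]
    (G : SimpleGraph V) [DecidableRel G.Adj] : Matrix G.Dart G.Dart ℂ :=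
  fun e f =>
    if f = e.symm then 2 / (G.degree f.snd : ℂ) - 1
    else if f.snd = e.fst then 2 / (G.degree f.snd : ℂ)
    else 0

/-- `G` induces a `k`-periodic Grover walk: `U ^ k = 1` and `U ^ j ≠ 1` for `1 ≤ j < k`. -/
def InducesPeriodicGroverWalk {V : Type*} [Fintype V] [DecidableEq V]
    (G : SimpleGraph V) [DecidableRel G.Adj] (k : ℕ) : Prop :=
  groverMatrix G ^ k = 1 ∧ ∀ j : ℕ, 1 ≤ j → j < k → groverMatrix G ^ j ≠ 1

/-- The transition matrix of the isotropic random walk on `G`: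
`T u v = 1/deg(u)` if `u ∼ v` and `0` otherwise. -/
noncomputable def transitionMatrix {V : Type*} [Fintype V]
    (G : SimpleGraph V) [DecidableRel G.Adj] : Matrix V V ℝ :=
  fun u v => if G.Adj u v then 1 / (G.degree u : ℝ) else 0

open Finset in
section
set_option linter.unusedSectionVars false

namespace GroverAux
variable {V : Type*} [Fintype V] [DecidableEq V] {G : SimpleGraph V} [DecidableRel G.Adj]

@[simp] lemma symm_fst (e : G.Dart) : e.symm.fst = e.snd := rfl
@[simp] lemma symm_snd (e : G.Dart) : e.symm.snd = e.fst := rfl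

lemma symm_inj {e f : G.Dart} (h : e.symm = f.symm) : e = f := by
  have := congrArg SimpleGraph.Dart.symm h
  simpa [SimpleGraph.Dart.symm_symm] using this

lemma grover_eq (e f : G.Dart) :
    groverMatrix G e f =
      (if f.snd = e.fst then 2 / (G.degree f.snd : ℂ) else 0) -
      (if f = e.symm then 1 else 0) := by
  unfold groverMatrix
  by_cases h : f = e.symm
  · subst h; simp
  · by_cases h2 : f.snd = e.fst <;> simp [h, h2]

lemma grover_eq' (e f : G.Dart) :
    groverMatrix G e f =
      (if f.snd = e.fst then 2 / (G.degree e.fst : ℂ) else 0) -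
      (if f = e.symm then 1 else 0) := by
  rw [grover_eq]
  by_cases h2 : f.snd = e.fst
  · rw [if_pos h2, if_pos h2, h2]
  · rw [if_neg h2, if_neg h2]

lemma deg_ne_zero (e : G.Dart) : (G.degree e.fst : ℂ) ≠ 0 := by
  have : 0 < G.degree e.fst := (G.degree_pos_iff_exists_adj e.fst).mpr ⟨e.snd, e.adj⟩
  exact_mod_cast this.ne'

/-- sum over darts with prescribed snd -/
lemma sum_snd (u : V) (c : ℂ) :
    ∑ g : G.Dart, (if g.snd = u then c else 0) = (G.degree u : ℂ) * c := by
  rw [← Finset.sum_filter, Finset.sum_const]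
  have hcard : (Finset.univ.filter (fun g : G.Dart => g.snd = u)).card = G.degree u := by
    rw [← G.dart_fst_fiber_card_eq_degree u]
    apply Finset.card_nbij' (fun d => d.symm) (fun d => d.symm) <;>
      simp [Set.MapsTo, Set.LeftInvOn, Set.RightInvOn, Set.EqOn, SimpleGraph.Dart.symm_symm]
  rw [hcard]; simp [nsmul_eq_mul]

/-- unique dart between two vertices -/
lemma sum_pair (a b : V) (c : ℂ) :
    ∑ g : G.Dart, (if g.fst = a ∧ g.snd = b then c else 0) =
      if G.Adj a b then c else 0 := by
  by_cases h : G.Adj a b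
  · rw [if_pos h, Finset.sum_eq_single (SimpleGraph.Dart.mk (a, b) h)]
    · simp
    · intro g _ hg
      rw [if_neg]
      rintro ⟨h1, h2⟩
      exact hg (SimpleGraph.Dart.ext _ _ (Prod.ext h1 h2))
    · simp
  · rw [if_neg h]
    apply Finset.sum_eq_zero
    intro g _
    rw [if_neg]
    rintro ⟨h1, h2⟩
    exact h (h1 ▸ h2 ▸ g.adj)

lemma sum_point (d : G.Dart) (F : G.Dart → ℂ) :
    ∑ g : G.Dart, (if g = d then F g else 0) = F d := by
  rw [Finset.sum_ite_eq' Finset.univ d F]; simp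

end GroverAux

namespace Step2
variable {V : Type*} [Fintype V] [DecidableEq V] {G : SimpleGraph V} [DecidableRel G.Adj]
open GroverAux

lemma ite_and_mul (p q : Prop) [Decidable p] [Decidable q] (a b : ℂ) :
    (if p then a else 0) * (if q then b else 0) = if p ∧ q then a * b else 0 := by
  split_ifs <;> simp_all

lemma mul_transpose : groverMatrix G * (groverMatrix G)ᵀ = 1 := by
  ext e f
  rw [Matrix.mul_apply, Matrix.one_apply]
  have expand : ∀ g : G.Dart, groverMatrix G e g * (groverMatrix G)ᵀ g f =
      (if g.snd = e.fst ∧ g.snd = f.fst then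
          (2 / (G.degree e.fst : ℂ)) * (2 / (G.degree f.fst : ℂ)) else 0)
      - (if g = f.symm then (if g.snd = e.fst then 2 / (G.degree e.fst : ℂ) else 0) else 0)
      - (if g = e.symm then (if g.snd = f.fst then 2 / (G.degree f.fst : ℂ) else 0) else 0)
      + (if g = e.symm then (if g = f.symm then (1:ℂ) else 0) else 0) := by
    intro g
    rw [Matrix.transpose_apply, grover_eq' e g, grover_eq' f g, sub_mul, mul_sub, mul_sub,
      ite_and_mul]
    split_ifs <;> simp_all <;> ring
  rw [Finset.sum_congr rfl (fun g _ => expand g)]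
  rw [Finset.sum_add_distrib, Finset.sum_sub_distrib, Finset.sum_sub_distrib,
    sum_point, sum_point, sum_point]
  by_cases hef : e.fst = f.fst
  · have hdf : (G.degree f.fst : ℂ) = (G.degree e.fst : ℂ) := by rw [hef]
    have hcond : ∀ g : G.Dart, (g.snd = e.fst ∧ g.snd = f.fst) = (g.snd = e.fst) := by
      intro g; rw [eq_iff_iff]; constructor
      · exact fun h => h.1
      · exact fun h => ⟨h, h.trans hef⟩
    simp only [hcond]
    rw [symm_snd, symm_snd]
    rw [sum_snd, hdf, if_pos (hef.symm : f.fst = e.fst), if_pos hef]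
    have hde := deg_ne_zero e
    by_cases hef2 : e = f
    · rw [if_pos (hef2 ▸ rfl : e.symm = f.symm), if_pos hef2]; field_simp; ring
    · rw [if_neg (fun h => hef2 (symm_inj h)), if_neg hef2]; field_simp; ring
  · have hcond : ∀ g : G.Dart, ¬(g.snd = e.fst ∧ g.snd = f.fst) := by
      rintro g ⟨h1, h2⟩; exact hef (h1.symm.trans h2)
    have hne : e ≠ f := fun h => hef (h ▸ rfl)
    rw [symm_snd, symm_snd]
    rw [if_neg (fun h : f.fst = e.fst => hef h.symm), if_neg (fun h : e.fst = f.fst => hef h),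
      if_neg (fun h : e.symm = f.symm => hne (symm_inj h)), if_neg hne]
    rw [Finset.sum_eq_zero (fun g _ => if_neg (hcond g))]
    ring

end Step2

namespace Step3
variable {V : Type*} [Fintype V] [DecidableEq V] {G : SimpleGraph V} [DecidableRel G.Adj]
open GroverAux Step2

lemma mul_apply_formula (e f : G.Dart) :
    (groverMatrix G * groverMatrix G) e f =
      (if G.Adj f.snd e.fst then
          (2 / (G.degree e.fst : ℂ)) * (2 / (G.degree f.snd : ℂ)) else 0)
      - (if f.fst = e.fst then 2 / (G.degree e.fst : ℂ) else 0)
      - (if f.snd = e.snd then 2 / (G.degree f.snd : ℂ) else 0)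
      + (if e = f then 1 else 0) := by
  rw [Matrix.mul_apply]
  have expand : ∀ g : G.Dart, groverMatrix G e g * groverMatrix G g f =
      (if g.fst = f.snd ∧ g.snd = e.fst then
          (2 / (G.degree e.fst : ℂ)) * (2 / (G.degree f.snd : ℂ)) else 0)
      - (if g = f.symm then (if g.snd = e.fst then 2 / (G.degree e.fst : ℂ) else 0) else 0)
      - (if g = e.symm then (if f.snd = g.fst then 2 / (G.degree f.snd : ℂ) else 0) else 0)
      + (if g = e.symm then (if g = f.symm then (1:ℂ) else 0) else 0) := by
    intro g
    have hfg : (f = g.symm) = (g = f.symm) := by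
      rw [eq_iff_iff]
      constructor
      · rintro rfl; rw [SimpleGraph.Dart.symm_symm]
      · rintro rfl; rw [SimpleGraph.Dart.symm_symm]
    rw [grover_eq' e g, grover_eq g f]
    simp only [hfg]
    rw [sub_mul, mul_sub, mul_sub]
    have h1 : (if g.snd = e.fst then 2 / (G.degree e.fst : ℂ) else 0) *
        (if f.snd = g.fst then 2 / (G.degree f.snd : ℂ) else 0) =
        if g.fst = f.snd ∧ g.snd = e.fst then
          (2 / (G.degree e.fst : ℂ)) * (2 / (G.degree f.snd : ℂ)) else 0 := by
      rw [ite_and_mul]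
      by_cases hA : g.snd = e.fst <;> by_cases hB : g.fst = f.snd
      · rw [if_pos ⟨hA, hB.symm⟩, if_pos ⟨hB, hA⟩]
      · rw [if_neg (fun h => hB h.2.symm), if_neg (fun h => hB h.1)]
      · rw [if_neg (fun h => hA h.1), if_neg (fun h => hA h.2)]
      · rw [if_neg (fun h => hA h.1), if_neg (fun h => hA h.2)]
    rw [h1]
    clear hfg
    split_ifs <;> first | ring | (exfalso; subst_vars; simp_all)
  rw [Finset.sum_congr rfl (fun g _ => expand g)]
  rw [Finset.sum_add_distrib, Finset.sum_sub_distrib, Finset.sum_sub_distrib,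
    sum_point, sum_point, sum_point, GroverAux.sum_pair]
  simp only [symm_snd, symm_fst]
  by_cases h : e = f
  · rw [if_pos (h ▸ rfl : e.symm = f.symm), if_pos h]; rfl
  · rw [if_neg (fun hh => h (symm_inj hh)), if_neg h]; rfl

end Step3

namespace Step4
variable {V : Type*} [Fintype V] [DecidableEq V] {G : SimpleGraph V} [DecidableRel G.Adj]
open GroverAux Step2 Step3

lemma deg_ne_zero' {u v : V} (h : G.Adj u v) : (G.degree u : ℂ) ≠ 0 := by
  have : 0 < G.degree u := (G.degree_pos_iff_exists_adj u).mpr ⟨v, h⟩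
  exact_mod_cast this.ne'

lemma endpoint_deg_two (hsq : groverMatrix G * groverMatrix G = (groverMatrix G)ᵀ)
    {u v : V} (h : G.Adj u v) : G.degree u = 2 ∨ G.degree v = 2 := by
  set e : G.Dart := SimpleGraph.Dart.mk (u, v) h with he
  have key : (groverMatrix G * groverMatrix G) e e = (groverMatrix G)ᵀ e e := by rw [hsq]
  rw [mul_apply_formula, Matrix.transpose_apply, grover_eq] at key
  have hfst : e.fst = u := rfl
  have hsnd : e.snd = v := rfl
  rw [if_pos (h.symm : G.Adj e.snd e.fst), if_pos rfl, if_pos rfl, if_pos rfl,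
    if_neg (SimpleGraph.Dart.snd_ne_fst e), if_neg (fun hh => SimpleGraph.Dart.symm_ne e hh.symm)]
    at key
  -- key : αβ - α - β + 1 = 0 - 0
  have hu : (G.degree u : ℂ) ≠ 0 := deg_ne_zero' h
  have hv : (G.degree v : ℂ) ≠ 0 := deg_ne_zero' h.symm
  have key2 : (2 / (G.degree u : ℂ) - 1) * (2 / (G.degree v : ℂ) - 1) = 0 := by
    rw [hfst, hsnd] at key; linear_combination key
  rcases mul_eq_zero.mp key2 with hh | hh
  · left
    have : (G.degree u : ℂ) = 2 := by field_simp at hh; linear_combination -hh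
    exact_mod_cast this
  · right
    have : (G.degree v : ℂ) = 2 := by field_simp at hh; linear_combination -hh
    exact_mod_cast this

lemma triangle (hsq : groverMatrix G * groverMatrix G = (groverMatrix G)ᵀ)
    {u v w : V} (h1 : G.Adj u v) (h2 : G.Adj v w) (hne : w ≠ u) : G.Adj w u := by
  set e : G.Dart := SimpleGraph.Dart.mk (u, v) h1 with he
  set f : G.Dart := SimpleGraph.Dart.mk (v, w) h2 with hf
  have key : (groverMatrix G * groverMatrix G) e f = (groverMatrix G)ᵀ e f := by rw [hsq]
  rw [mul_apply_formula, Matrix.transpose_apply, grover_eq] at key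
  have hef1 : ¬(f.fst = e.fst) := h1.ne'
  have hef2 : ¬(f.snd = e.snd) := h2.ne'
  have hef3 : ¬(e = f) := fun hh => h1.ne' (congrArg (fun d : G.Dart => d.fst) hh).symm
  have hef4 : (e.snd = f.fst) := rfl
  have hef5 : ¬(e = f.symm) := by
    intro hh
    exact hne (congrArg (fun d : G.Dart => d.fst) hh).symm
  rw [if_neg hef1, if_neg hef2, if_neg hef3, if_pos hef4, if_neg hef5] at key
  have hv : (2 : ℂ) / (G.degree e.snd : ℂ) ≠ 0 :=
    div_ne_zero two_ne_zero (deg_ne_zero' (h2 : G.Adj e.snd w))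
  by_contra hadj
  rw [if_neg (hadj : ¬ G.Adj f.snd e.fst)] at key
  exact hv (by linear_combination -key)

end Step4

namespace Step5
open GroverAux
variable {V W : Type*} [Fintype V] [DecidableEq V] [Fintype W] [DecidableEq W]
  {G : SimpleGraph V} [DecidableRel G.Adj] {H : SimpleGraph W} [DecidableRel H.Adj]

def dartEquiv (φ : G ≃g H) : G.Dart ≃ H.Dart where
  toFun d := ⟨(φ d.fst, φ d.snd), φ.map_rel_iff.mpr d.adj⟩
  invFun d := ⟨(φ.symm d.fst, φ.symm d.snd), φ.symm.map_rel_iff.mpr d.adj⟩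
  left_inv d := SimpleGraph.Dart.ext _ _ (Prod.ext (φ.toEquiv.symm_apply_apply _)
    (φ.toEquiv.symm_apply_apply _))
  right_inv d := SimpleGraph.Dart.ext _ _ (Prod.ext (φ.toEquiv.apply_symm_apply _)
    (φ.toEquiv.apply_symm_apply _))

lemma degree_map (φ : G ≃g H) (v : V) : H.degree (φ v) = G.degree v := by
  rw [← SimpleGraph.card_neighborSet_eq_degree, ← SimpleGraph.card_neighborSet_eq_degree]
  exact (Fintype.card_congr (φ.mapNeighborSet v)).symm

lemma grover_map (φ : G ≃g H) (e f : G.Dart) :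
    groverMatrix H (dartEquiv φ e) (dartEquiv φ f) = groverMatrix G e f := by
  have hsymm : (dartEquiv φ e).symm = dartEquiv φ e.symm := SimpleGraph.Dart.ext _ _ rfl
  have h1 : (dartEquiv φ f = (dartEquiv φ e).symm) ↔ (f = e.symm) := by
    rw [hsymm]; exact (dartEquiv φ).apply_eq_iff_eq
  have h2 : ((dartEquiv φ f).snd = (dartEquiv φ e).fst) ↔ (f.snd = e.fst) :=
    φ.toEquiv.apply_eq_iff_eq
  have h3 : (H.degree (dartEquiv φ f).snd : ℂ) = (G.degree f.snd : ℂ) := by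
    exact_mod_cast congrArg (Nat.cast : ℕ → ℂ) (degree_map φ f.snd)
  unfold groverMatrix
  by_cases hc1 : f = e.symm
  · rw [if_pos hc1, if_pos (h1.mpr hc1), h3]
  · rw [if_neg hc1, if_neg (fun hh => hc1 (h1.mp hh))]
    by_cases hc2 : f.snd = e.fst
    · rw [if_pos hc2, if_pos (h2.mpr hc2), h3]
    · rw [if_neg hc2, if_neg (fun hh => hc2 (h2.mp hh))]

lemma periodic_transport (φ : G ≃g H) (k : ℕ) :
    InducesPeriodicGroverWalk G k ↔ InducesPeriodicGroverWalk H k := by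
  set E := Matrix.reindexAlgEquiv ℂ ℂ (dartEquiv φ) with hE
  have hUG : E (groverMatrix G) = groverMatrix H := by
    ext i j
    rw [hE, Matrix.reindexAlgEquiv_apply, Matrix.reindex_apply, Matrix.submatrix_apply]
    conv_rhs => rw [← (dartEquiv φ).apply_symm_apply i, ← (dartEquiv φ).apply_symm_apply j]
    rw [grover_map]
  have key : ∀ j : ℕ, (groverMatrix G ^ j = 1) ↔ (groverMatrix H ^ j = 1) := by
    intro j
    rw [← hUG, ← map_pow]
    constructor
    · intro hh; rw [hh, _root_.map_one]
    · intro hh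
      have := congrArg E.symm hh
      rwa [AlgEquiv.symm_apply_apply, _root_.map_one] at this
  unfold InducesPeriodicGroverWalk
  constructor
  · rintro ⟨ha, hb⟩
    exact ⟨(key k).mp ha, fun j hj1 hj2 hh => hb j hj1 hj2 ((key j).mpr hh)⟩
  · rintro ⟨ha, hb⟩
    exact ⟨(key k).mpr ha, fun j hj1 hj2 hh => hb j hj1 hj2 ((key j).mp hh)⟩

end Step5

namespace Step6
open GroverAux

def natC3 : Matrix (SimpleGraph.cycleGraph 3).Dart (SimpleGraph.cycleGraph 3).Dart ℕ :=
  fun e f => if f = e.symm then 0 else if f.snd = e.fst then 1 else 0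

lemma c3_deg (v : Fin 3) : (SimpleGraph.cycleGraph 3).degree v = 2 :=
  SimpleGraph.cycleGraph_degree_three_le (n := 0)

lemma c3_cast : groverMatrix (SimpleGraph.cycleGraph 3) =
    (Nat.castRingHom ℂ).mapMatrix natC3 := by
  ext e f
  show groverMatrix (SimpleGraph.cycleGraph 3) e f = (natC3 e f : ℂ)
  unfold groverMatrix natC3
  rw [c3_deg]
  split_ifs <;> norm_num

lemma c3_periodic : InducesPeriodicGroverWalk (SimpleGraph.cycleGraph 3) 3 := by
  have hinj : Function.Injective ((Nat.castRingHom ℂ).mapMatrix :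
      Matrix (SimpleGraph.cycleGraph 3).Dart (SimpleGraph.cycleGraph 3).Dart ℕ → _) := by
    intro M N hMN
    ext i j
    exact Nat.cast_injective (congrFun (congrFun hMN i) j)
  have key : ∀ j : ℕ, (groverMatrix (SimpleGraph.cycleGraph 3) ^ j = 1) ↔ (natC3 ^ j = 1) := by
    intro j
    rw [c3_cast, ← map_pow]
    constructor
    · intro hh
      apply hinj
      rw [hh, _root_.map_one]
    · intro hh; rw [hh, _root_.map_one]
  constructor
  · rw [key]; decide
  · intro j hj1 hj2
    rw [Ne, key]
    interval_cases j
    · decide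
    · decide

end Step6


end

/-- **part of Theorem 3.2.** A finite simple connected graph `G` induces a
`3`-periodic Grover walk iff `G` is isomorphic to the cycle graph `C₃`. -/
theorem three_periodic_iff_cycleGraph_three {V : Type*} [Fintype V] [DecidableEq V]
    (G : SimpleGraph V) [DecidableRel G.Adj] (hG : G.Connected) :
    InducesPeriodicGroverWalk G 3 ↔ Nonempty (G ≃g SimpleGraph.cycleGraph 3) := by

  constructor
  · intro h
    have h3 : groverMatrix G * groverMatrix G * groverMatrix G = 1 := by
      have := h.1
      rwa [pow_succ, pow_succ, pow_one] at this
    have hsq : groverMatrix G * groverMatrix G = (groverMatrix G)ᵀ := by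
      calc groverMatrix G * groverMatrix G
          = (groverMatrix G * groverMatrix G) * (groverMatrix G * (groverMatrix G)ᵀ) := by
            rw [Step2.mul_transpose, mul_one]
        _ = (groverMatrix G * groverMatrix G * groverMatrix G) * (groverMatrix G)ᵀ := by
            noncomm_ring
        _ = (groverMatrix G)ᵀ := by rw [h3, one_mul]
    have hdart : Nonempty G.Dart := by
      by_contra hempty
      have hE : IsEmpty G.Dart := not_nonempty_iff.mp hempty
      apply h.2 1 le_rfl (by norm_num)
      rw [pow_one]
      ext e f
      exact isEmptyElim e
    obtain ⟨e0⟩ := hdart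
    obtain ⟨v, hv2⟩ : ∃ v, G.degree v = 2 := by
      rcases Step4.endpoint_deg_two hsq e0.adj with hh | hh
      exacts [⟨e0.fst, hh⟩, ⟨e0.snd, hh⟩]
    obtain ⟨u, w, huw, hset⟩ := Finset.card_eq_two.mp (hv2 : (G.neighborFinset v).card = 2)
    have hu : G.Adj v u := by rw [← SimpleGraph.mem_neighborFinset, hset]; simp
    have hw : G.Adj v w := by rw [← SimpleGraph.mem_neighborFinset, hset]; simp
    have hnbr : ∀ x, G.Adj v x → x = u ∨ x = w := by
      intro x hx
      have hxm : x ∈ G.neighborFinset v := (G.mem_neighborFinset v x).mpr hx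
      rw [hset] at hxm
      simpa using hxm
    have hwu : G.Adj w u := Step4.triangle hsq hu.symm hw huw.symm
    have hS : ∀ a b : V, G.Adj a b → (a = u ∨ a = v ∨ a = w) → (b = u ∨ b = v ∨ b = w) := by
      intro a b hab ha
      rcases ha with rfl | rfl | rfl
      · by_cases hbv : b = v
        · exact Or.inr (Or.inl hbv)
        · rcases hnbr b ((Step4.triangle hsq hu hab hbv).symm) with hh | hh
          exacts [Or.inl hh, Or.inr (Or.inr hh)]
      · rcases hnbr b hab with hh | hh
        exacts [Or.inl hh, Or.inr (Or.inr hh)]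
      · by_cases hbv : b = v
        · exact Or.inr (Or.inl hbv)
        · rcases hnbr b ((Step4.triangle hsq hw hab hbv).symm) with hh | hh
          exacts [Or.inl hh, Or.inr (Or.inr hh)]
    have hall : ∀ x : V, x = u ∨ x = v ∨ x = w := by
      have aux : ∀ (a b : V) (p : G.Walk a b),
          (a = u ∨ a = v ∨ a = w) → (b = u ∨ b = v ∨ b = w) := by
        intro a b p
        induction p with
        | nil => exact id
        | cons hadj q ih => exact fun ha => ih (hS _ _ hadj ha)
      exact fun x => aux v x (hG.preconnected v x).some (Or.inr (Or.inl rfl))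
    have hvu : v ≠ u := hu.ne
    have hvw : v ≠ w := hw.ne
    have hadj : ∀ x y : V, x ≠ y → G.Adj x y := by
      intro x y hxy
      rcases hall x with rfl | rfl | rfl <;> rcases hall y with rfl | rfl | rfl <;>
        first
          | exact absurd rfl hxy
          | exact hu | exact hu.symm | exact hw | exact hw.symm | exact hwu | exact hwu.symm
    let φ : V ≃ Fin 3 :=
      { toFun := fun x => if x = u then 0 else if x = v then 1 else 2
        invFun := fun i => if i = 0 then u else if i = 1 then v else w
        left_inv := by
          intro x
          rcases hall x with rfl | rfl | rfl
          · simp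
          · simp [hvu]
          · simp [Ne.symm huw, Ne.symm hvw]
        right_inv := by
          intro i
          fin_cases i <;> simp [hvu, Ne.symm huw, Ne.symm hvw] }
    have hiso : G ≃g (⊤ : SimpleGraph (Fin 3)) :=
      { φ with
        map_rel_iff' := by
          intro a b
          simp only [SimpleGraph.top_adj]
          constructor
          · intro hne2
            exact hadj a b (fun hh => hne2 (by rw [hh]))
          · intro hab
            exact fun hh => hab.ne (φ.injective hh) }
    have htop : (⊤ : SimpleGraph (Fin 3)) ≃g SimpleGraph.cycleGraph 3 := by
      rw [SimpleGraph.cycleGraph_three_eq_top]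
    exact ⟨hiso.trans htop⟩
  · rintro ⟨φ⟩
    exact (Step5.periodic_transport φ 3).mpr Step6.c3_periodic
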